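/- Let 0 < α < 1/M, β > 0 and d ∈ ℝ^N with d_m > 0 for all m, let x̂^∞ be the fixed point of the map x ↦ F(x) − β d, and define μ̂₀^∞ = 1/(1 + Σ_{m=1}^N exp(x̂_m^∞)). With d̲ = min_{m=1,…,N} d_m, the steady-state belief on the true state satisfies the lower bound μ̂₀^∞ ≥ ( (1 − αM)·exp(β d̲) − 1 + α ) / ( (1 − αM)·(exp(β d̲) − 1) ). -/

import Mathlib

/-- The αβ-HMM log-belief-ratio mapping `F`, defined componentwise for `m = 1, …, M-1` by
`F_m(x) = log(((1 - αM)·exp(x_m) + α + α·Σ_n exp(x_n)) / (1 - αM + α + α·Σ_n exp(x_n)))`. -/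
noncomputable def abHMM.F (α : ℝ) (M : ℕ) (x : Fin (M - 1) → ℝ) : Fin (M - 1) → ℝ :=
  fun m => Real.log (((1 - α * M) * Real.exp (x m) + α + α * ∑ n, Real.exp (x n)) /
    (1 - α * M + α + α * ∑ n, Real.exp (x n)))

/-- Theorem 2, lower bound: with `d̲ = min_m d_m`, the steady-state belief
`μ̂₀^∞ = 1/(1 + Σ_m exp(x̂_m^∞))` on the true state satisfies
`μ̂₀^∞ ≥ ((1-αM)·exp(β d̲) - 1 + α)/((1-αM)·(exp(β d̲) - 1))`. -/
theorem abHMM_steady_state_belief_lower_bound (M : ℕ) (hM : 2 ≤ M) (α β : ℝ)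
    (hα : 0 < α) (hα' : α < 1 / M) (hβ : 0 < β)
    (d : Fin (M - 1) → ℝ) (hd : ∀ m, 0 < d m)
    (xinf : Fin (M - 1) → ℝ) (hfix : xinf = fun m => abHMM.F α M xinf m - β * d m)
    (dlow : ℝ) (hdlow : dlow = sInf (Set.range d))
    (μ₀ : ℝ) (hμ₀ : μ₀ = 1 / (1 + ∑ m, Real.exp (xinf m))) :
    ((1 - α * M) * Real.exp (β * dlow) - 1 + α) /
      ((1 - α * M) * (Real.exp (β * dlow) - 1)) ≤ μ₀ := by
  have hNE : Nonempty (Fin (M - 1)) := ⟨⟨0, by omega⟩⟩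
  have hM2 : (2:ℝ) ≤ (M:ℝ) := by exact_mod_cast hM
  have hMpos : (0:ℝ) < (M:ℝ) := by linarith
  have hc : 0 < 1 - α * M := by
    have : α * M < 1 := by
      have := (lt_div_iff₀ hMpos).mp hα'
      linarith
    linarith
  set S : ℝ := ∑ m, Real.exp (xinf m) with hS
  have hSpos : 0 < S :=
    Finset.sum_pos (fun _ _ => Real.exp_pos _) Finset.univ_nonempty
  -- facts about dlow
  have hdlow_le : ∀ m, dlow ≤ d m := by
    intro m
    rw [hdlow]
    exact csInf_le (Set.Finite.bddBelow (Set.finite_range d)) ⟨m, rfl⟩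
  have hdlow_pos : 0 < dlow := by
    have hmem : dlow ∈ Set.range d := by
      rw [hdlow]
      exact (Set.range_nonempty d).csInf_mem (Set.finite_range d)
    obtain ⟨m0, hm0⟩ := hmem
    rw [← hm0]; exact hd m0
  set E : ℝ := Real.exp (β * dlow) with hE
  have hE1 : 1 < E := by
    rw [hE, ← Real.exp_zero]
    exact Real.exp_lt_exp.mpr (mul_pos hβ hdlow_pos)
  have hden : 0 < 1 - α * M + α + α * S := by
    have : 0 < α * S := mul_pos hα hSpos
    linarith
  -- the per-component fixed-point identity
  have key : ∀ m, Real.exp (xinf m) * ((1 - α * M + α + α * S) * Real.exp (β * d m))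
      = (1 - α * M) * Real.exp (xinf m) + α + α * S := by
    intro m
    have hnum : 0 < (1 - α * M) * Real.exp (xinf m) + α + α * S := by
      have h1 : 0 < (1 - α * M) * Real.exp (xinf m) := mul_pos hc (Real.exp_pos _)
      have h2 : 0 < α * S := mul_pos hα hSpos
      linarith
    have hx : xinf m + β * d m = abHMM.F α M xinf m := by
      have := congrFun hfix m
      linarith
    have := congrArg Real.exp hx
    rw [Real.exp_add, abHMM.F, Real.exp_log (div_pos hnum hden)] at this
    field_simp at this
    nlinarith [this, Real.exp_pos (xinf m), Real.exp_pos (β * d m)]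
  -- per-component inequality using exp(β d m) ≥ E
  have hineq : ∀ m, Real.exp (xinf m) * ((1 - α * M + α + α * S) * E - (1 - α * M))
      ≤ α + α * S := by
    intro m
    have hEle : E ≤ Real.exp (β * d m) :=
      Real.exp_le_exp.mpr (mul_le_mul_of_nonneg_left (hdlow_le m) hβ.le)
    have hpos : 0 ≤ Real.exp (xinf m) * (1 - α * M + α + α * S) :=
      mul_nonneg (Real.exp_pos _).le hden.le
    have := key m
    nlinarith [mul_le_mul_of_nonneg_left hEle hpos]
  -- sum it up
  have hsum : S * ((1 - α * M + α + α * S) * E - (1 - α * M))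
      ≤ ((M:ℝ) - 1) * (α + α * S) := by
    have h1 : ∑ m, Real.exp (xinf m) * ((1 - α * M + α + α * S) * E - (1 - α * M))
        ≤ ∑ _m : Fin (M - 1), (α + α * S) :=
      Finset.sum_le_sum (fun m _ => hineq m)
    rw [← Finset.sum_mul, ← hS, Finset.sum_const, Finset.card_univ, Fintype.card_fin,
      nsmul_eq_mul] at h1
    have hcast : ((M - 1 : ℕ) : ℝ) = (M:ℝ) - 1 := by
      have : (1:ℕ) ≤ M := by omega
      push_cast [Nat.cast_sub this]
      ring
    rw [hcast] at h1
    exact h1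
  -- finish
  rw [hμ₀]
  have hG : 0 < (1 - α * M) * (E - 1) := mul_pos hc (by linarith)
  have hT : 0 < 1 + S := by linarith
  rw [div_le_div_iff₀ hG hT]
  have hslack : 0 < α * E * (S * (1 + S)) :=
    mul_pos (mul_pos hα (by linarith)) (mul_pos hSpos hT)
  nlinarith [hsum, hslack]
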